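/- Cyclicity of the Killing-type form (affine, degree-zero version of Example 2.4 of the paper): let (A, ρ) be affine Lie algebroid data over R such that L := ker ρ is a finite free R-module. For x ∈ L let ad x denote the R-linear endomorphism y ↦ ⁅x, y⁆ of L, and define ⟨x, y⟩ := Tr((ad x)∘(ad y)), where Tr is the trace of R-linear endomorphisms of L. Then for all a ∈ A and x, y ∈ L one has ⟨⁅a,x⁆, y⟩ + ⟨x, ⁅a,y⁆⟩ = ρ(a)(⟨x, y⟩). -/

import Mathlib

/-- Cyclicity of the Killing-type form: let `(A, ρ)` be affine Lie
algebroid data over `R` such that `L := ker ρ` is a finite free `R`-module. For `x ∈ L`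
let `ad x` denote the `R`-linear endomorphism `y ↦ ⁅x, y⁆` of `L`, and define
`⟨x, y⟩ := Tr(ad x ∘ ad y)`, where `Tr` is the trace of `R`-linear endomorphisms of
`L`. Then for all `a ∈ A` and `x, y ∈ L` one has
`⟨⁅a,x⁆, y⟩ + ⟨x, ⁅a,y⁆⟩ = ρ a (⟨x, y⟩)`. -/
theorem killing_form_cyclic
    {K R A : Type*} [Field K] [CharZero K] [CommRing R] [Algebra K R]
    [LieRing A] [LieAlgebra K A] [Module R A] [IsScalarTower K R A]
    (ρ : A →ₗ[R] Derivation K R R)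
    (hmor : ∀ a b : A, ρ ⁅a, b⁆ = ⁅ρ a, ρ b⁆)
    (hleib : ∀ (a b : A) (f : R), ⁅a, f • b⁆ = f • ⁅a, b⁆ + (ρ a f) • b)
    [Module.Free R (LinearMap.ker ρ)] [Module.Finite R (LinearMap.ker ρ)]
    (adm : LinearMap.ker ρ → (LinearMap.ker ρ →ₗ[R] LinearMap.ker ρ))
    (hadm : ∀ x y : LinearMap.ker ρ, ((adm x y : LinearMap.ker ρ) : A) = ⁅(x : A), (y : A)⁆)
    (a : A) (x y ax ay : LinearMap.ker ρ)
    (hax : (ax : A) = ⁅a, (x : A)⁆) (hay : (ay : A) = ⁅a, (y : A)⁆) :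
    LinearMap.trace R (LinearMap.ker ρ) (adm ax ∘ₗ adm y)
      + LinearMap.trace R (LinearMap.ker ρ) (adm x ∘ₗ adm ay)
      = ρ a (LinearMap.trace R (LinearMap.ker ρ) (adm x ∘ₗ adm y)) := by
  classical
  -- membership of ⁅a, z⁆ in the kernel
  have hmem : ∀ z : LinearMap.ker ρ, ⁅a, (z : A)⁆ ∈ LinearMap.ker ρ := by
    intro z
    have hz : ρ (z : A) = 0 := z.2
    rw [LinearMap.mem_ker, hmor, hz]
    simp
  -- the operator D z = ⁅a, z⁆, as an additive map on the kernel
  let D : LinearMap.ker ρ →+ LinearMap.ker ρ :=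
    AddMonoidHom.mk' (fun z => ⟨⁅a, (z : A)⁆, hmem z⟩) (by
      intro z w; apply Subtype.ext; simp)
  have hDcoe : ∀ z : LinearMap.ker ρ, ((D z : LinearMap.ker ρ) : A) = ⁅a, (z : A)⁆ := by
    intro z; rfl
  have hDsmul : ∀ (f : R) (z : LinearMap.ker ρ), D (f • z) = f • D z + (ρ a f) • z := by
    intro f z
    apply Subtype.ext
    push_cast [hDcoe]
    exact hleib a z f
  -- choose a basis
  let ι := Module.Free.ChooseBasisIndex R (LinearMap.ker ρ)
  let b : Module.Basis ι R (LinearMap.ker ρ) := Module.Free.chooseBasis R (LinearMap.ker ρ)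
  -- repr of D
  have hDrepr : ∀ (z : LinearMap.ker ρ) (k : ι),
      b.repr (D z) k = ρ a (b.repr z k) + ∑ i, b.repr z i * b.repr (D (b i)) k := by
    intro z k
    conv_lhs => rw [← b.sum_repr z, map_sum]
    have hterm : ∀ i : ι, D (b.repr z i • b i)
        = b.repr z i • D (b i) + (ρ a (b.repr z i)) • b i := fun i => hDsmul _ _
    rw [Finset.sum_congr rfl fun i _ => hterm i]
    simp only [map_sum, map_add, map_smul, Finsupp.coe_add, Finsupp.coe_smul,
      Finsupp.finset_sum_apply, Finsupp.smul_apply, Pi.add_apply, Pi.smul_apply,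
      smul_eq_mul, Finset.sum_add_distrib, b.repr_self_apply, mul_ite, mul_one, mul_zero,
      Finset.sum_ite_eq, Finset.sum_ite_eq', Finset.mem_univ, if_true]
    ring
  -- trace via basis
  have htr : ∀ f : LinearMap.ker ρ →ₗ[R] LinearMap.ker ρ,
      LinearMap.trace R (LinearMap.ker ρ) f = ∑ j, b.repr (f (b j)) j := by
    intro f
    rw [LinearMap.trace_eq_matrix_trace R b f, Matrix.trace]
    simp [LinearMap.toMatrix_apply, Matrix.diag]
  set T := adm x ∘ₗ adm y with hT
  -- the key commutator identity, pointwise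
  have hkey : ∀ j : ι,
      (adm ax ∘ₗ adm y) (b j) + (adm x ∘ₗ adm ay) (b j)
        = D (T (b j)) - T (D (b j)) := by
    intro j
    apply Subtype.ext
    simp only [hT, Submodule.coe_add, AddSubgroupClass.coe_sub,
      LinearMap.comp_apply, hDcoe, hadm, hax, hay]
    simp only [lie_lie, lie_sub, lie_add]
    abel
  -- compute the left side
  rw [htr, htr, htr, ← Finset.sum_add_distrib]
  have step1 : ∀ j : ι,
      b.repr ((adm ax ∘ₗ adm y) (b j)) j + b.repr ((adm x ∘ₗ adm ay) (b j)) j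
        = b.repr (D (T (b j))) j - b.repr (T (D (b j))) j := by
    intro j
    have := congrArg (fun w => b.repr w j) (hkey j)
    simpa using this
  have hTD : ∀ j : ι, b.repr (T (D (b j))) j
      = ∑ i, b.repr (D (b j)) i * b.repr (T (b i)) j := by
    intro j
    conv_lhs => rw [← b.sum_repr (D (b j)), map_sum, map_sum]
    simp
  calc ∑ j, (b.repr ((adm ax ∘ₗ adm y) (b j)) j + b.repr ((adm x ∘ₗ adm ay) (b j)) j)
      = ∑ j, (b.repr (D (T (b j))) j - b.repr (T (D (b j))) j) :=
        Finset.sum_congr rfl fun j _ => step1 j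
    _ = ∑ j, (ρ a (b.repr (T (b j)) j)
          + ((∑ i, b.repr (T (b j)) i * b.repr (D (b i)) j)
            - ∑ i, b.repr (D (b j)) i * b.repr (T (b i)) j)) := by
        refine Finset.sum_congr rfl fun j _ => ?_
        rw [hDrepr (T (b j)) j, hTD j, add_sub_assoc]
    _ = ∑ j, ρ a (b.repr (T (b j)) j) := by
        rw [Finset.sum_add_distrib, Finset.sum_sub_distrib]
        have : (∑ j : ι, ∑ i : ι, b.repr (T (b j)) i * b.repr (D (b i)) j)
            = ∑ j : ι, ∑ i : ι, b.repr (D (b j)) i * b.repr (T (b i)) j := by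
          rw [Finset.sum_comm]
          exact Finset.sum_congr rfl fun i _ => Finset.sum_congr rfl fun j _ => mul_comm _ _
        rw [this, sub_self, add_zero]
    _ = ρ a (∑ j, b.repr (T (b j)) j) := (map_sum (ρ a) _ _).symm
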